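/- Let a, b, c ∈ ℝ with a > 0 and a·c − b² > 0, let Σ := !![a, b; b, c] and L := !![√a, 0; b/√a, √((a·c − b²)/a)]. Let ε = (ε₀, ε₁) ∈ ℝ² and μ ∈ ℝ², and set m := μ + L.mulVec ε. Then the second component of Σ⁻¹.mulVec (m − μ) equals ℓ · ε₁, where ℓ := √(a/(a·c − b²)). Consequently the velocity score of the Gaussian N(μ, Σ) at m = μ + Lε is ∇_v log p(m) = −ℓ ε₁. -/

import Mathlib

open Matrix Real

/-- Velocity score of the Gaussian `N(μ, Σ)` at `m = μ + L ε`: the second component of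
`Σ⁻¹ (m − μ)` equals `ℓ ε₁` with `ℓ = √(a/(ac − b²))`, so `∇_v log p(m) = −ℓ ε₁`. -/
theorem gaussian_velocity_score
    (a b c : ℝ) (ha : 0 < a) (hd : 0 < a * c - b ^ 2)
    (S L : Matrix (Fin 2) (Fin 2) ℝ)
    (hS : S = !![a, b; b, c])
    (hL : L = !![Real.sqrt a, 0;
                 b / Real.sqrt a, Real.sqrt ((a * c - b ^ 2) / a)])
    (ε μ : Fin 2 → ℝ) (m : Fin 2 → ℝ)
    (hm : m = μ + L.mulVec ε)
    (ℓ : ℝ) (hℓ : ℓ = Real.sqrt (a / (a * c - b ^ 2))) :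
    (S⁻¹.mulVec (m - μ)) 1 = ℓ * ε 1 := by
  subst hS hL hm hℓ
  have hdet : (!![a, b; b, c]).det = a * c - b ^ 2 := by
    simp [Matrix.det_fin_two]; ring
  have hinv : (!![a, b; b, c])⁻¹ = (a * c - b ^ 2)⁻¹ • !![c, -b; -b, a] := by
    rw [Matrix.inv_def, hdet, Matrix.adjugate_fin_two]
    simp [Matrix.smul_of]
  have hsa : Real.sqrt a ≠ 0 := (Real.sqrt_pos.mpr ha).ne'
  have hsa2 : Real.sqrt a * Real.sqrt a = a := Real.mul_self_sqrt ha.le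
  have hsd : Real.sqrt (a * c - b ^ 2) ≠ 0 := (Real.sqrt_pos.mpr hd).ne'
  have hsd2 : Real.sqrt (a * c - b ^ 2) * Real.sqrt (a * c - b ^ 2) = a * c - b ^ 2 :=
    Real.mul_self_sqrt hd.le
  have key : a * Real.sqrt ((a * c - b ^ 2) / a) / (a * c - b ^ 2)
      = Real.sqrt (a / (a * c - b ^ 2)) := by
    rw [Real.sqrt_div hd.le, Real.sqrt_div ha.le]
    field_simp
    nlinarith [hsa2, hsd2]
  have hcancel :
      μ + (!![Real.sqrt a, 0; b / Real.sqrt a,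
        Real.sqrt ((a * c - b ^ 2) / a)]).mulVec ε - μ
        = (!![Real.sqrt a, 0; b / Real.sqrt a,
        Real.sqrt ((a * c - b ^ 2) / a)]).mulVec ε := by abel
  rw [hcancel, hinv]
  simp only [Matrix.mulVec, dotProduct, Matrix.of_apply, Fin.sum_univ_two, Matrix.smul_apply,
    Matrix.cons_val', Matrix.cons_val_zero, Matrix.cons_val_one, Matrix.head_cons,
    Matrix.head_fin_const, Matrix.empty_val', Matrix.cons_val_fin_one, smul_eq_mul]
  rw [← key]
  have h3 : Real.sqrt a ^ 3 = a * Real.sqrt a := by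
    rw [pow_succ, pow_two, hsa2]
  field_simp
  ring_nf
  rw [Real.sq_sqrt ha.le]
  ring
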